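/- Let H0 and H1 be complex Hilbert spaces and let A0 on H0 and A1 on H1 be bounded self-adjoint operators whose spectra are disjoint, with d := dist(spectrum(A0), spectrum(A1)) > 0. Assume in addition that the convex hull of the real spectrum of A0 is disjoint from the spectrum of A1, or the spectrum of A0 is disjoint from the convex hull of the real spectrum of A1 (this covers both the case of subordinated spectra and the case where one spectrum lies in a finite gap of the other). Then for every bounded operator Y : H0 → H1 the Sylvester equation X A0 − A1 X = Y has a unique bounded solution X, and this solution satisfies d·‖X‖ ≤ ‖Y‖. (Bounded-operator version of Theorem 3.6 (ii) of the paper.) -/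

import Mathlib

open ContinuousLinearMap
open scoped ENNReal


set_option maxHeartbeats 1000000 in
-- key lemma, case where b1 is invertible with inverse c1
lemma sylvester_key_right {H0 H1 : Type*}
    [NormedAddCommGroup H0] [InnerProductSpace ℂ H0] [CompleteSpace H0]
    [NormedAddCommGroup H1] [InnerProductSpace ℂ H1] [CompleteSpace H1]
    (b0 : H0 →L[ℂ] H0) (b1 c1 : H1 →L[ℂ] H1)
    (h1 : b1 ∘L c1 = ContinuousLinearMap.id ℂ H1)
    (h2 : c1 ∘L b1 = ContinuousLinearMap.id ℂ H1)
    (r d : ℝ) (hd : 0 < d) (hb0 : ‖b0‖ ≤ r) (hc1 : ‖c1‖ ≤ 1 / (r + d))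
    (Y : H0 →L[ℂ] H1) :
    (∃! X : H0 →L[ℂ] H1, X ∘L b0 - b1 ∘L X = Y) ∧
      ∀ X : H0 →L[ℂ] H1, X ∘L b0 - b1 ∘L X = Y → d * ‖X‖ ≤ ‖Y‖ := by
  have hr : 0 ≤ r := le_trans (norm_nonneg _) hb0
  have hrd : 0 < r + d := by linarith
  have hc1' : ‖c1‖ * (r + d) ≤ 1 := by
    rw [← le_div_iff₀ hrd]; exact hc1
  -- fixed point characterization
  set f : (H0 →L[ℂ] H1) → (H0 →L[ℂ] H1) :=
    fun X => c1 ∘L X ∘L b0 - c1 ∘L Y with hf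
  have hiff : ∀ X : H0 →L[ℂ] H1, (X ∘L b0 - b1 ∘L X = Y) ↔ f X = X := by
    intro X
    constructor
    · intro hX
      have : c1 ∘L (X ∘L b0 - b1 ∘L X) = c1 ∘L Y := by rw [hX]
      rw [comp_sub] at this
      have h3 : c1 ∘L (b1 ∘L X) = X := by
        rw [← ContinuousLinearMap.comp_assoc, h2, ContinuousLinearMap.id_comp]
      rw [h3] at this
      simp only [hf]
      rw [← ContinuousLinearMap.comp_assoc]
      -- this : c1 ∘L (X ∘L b0) - X = c1 ∘L Y
      have := sub_eq_iff_eq_add.mp this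
      rw [ContinuousLinearMap.comp_assoc]
      rw [this]; abel
    · intro hX
      have : b1 ∘L (f X) = b1 ∘L X := by rw [hX]
      simp only [hf, comp_sub] at this
      rw [← ContinuousLinearMap.comp_assoc b1 c1 (X ∘L b0), ← ContinuousLinearMap.comp_assoc b1 c1 Y, h1,
        ContinuousLinearMap.id_comp, ContinuousLinearMap.id_comp] at this
      rw [← this]; abel
  -- bound, general right-hand side
  have hboundg : ∀ (Z : H0 →L[ℂ] H1) (X : H0 →L[ℂ] H1),
      X ∘L b0 - b1 ∘L X = Z → d * ‖X‖ ≤ ‖Z‖ := by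
    intro Z X hX
    have h3 : c1 ∘L (b1 ∘L X) = X := by
      rw [← ContinuousLinearMap.comp_assoc, h2, ContinuousLinearMap.id_comp]
    have hfx : X = c1 ∘L (X ∘L b0) - c1 ∘L Z := by
      have : c1 ∘L (X ∘L b0 - b1 ∘L X) = c1 ∘L Z := by rw [hX]
      rw [comp_sub, h3] at this
      have := sub_eq_iff_eq_add.mp this
      rw [this]; abel
    have hnorm : ‖X‖ ≤ ‖c1‖ * (‖X‖ * ‖b0‖) + ‖c1‖ * ‖Z‖ := by
      calc ‖X‖ = ‖c1 ∘L (X ∘L b0) - c1 ∘L Z‖ := by rw [← hfx]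
        _ ≤ ‖c1 ∘L (X ∘L b0)‖ + ‖c1 ∘L Z‖ := norm_sub_le _ _
        _ ≤ ‖c1‖ * (‖X‖ * ‖b0‖) + ‖c1‖ * ‖Z‖ := by
            gcongr
            · exact le_trans (opNorm_comp_le _ _)
                (by gcongr; exact opNorm_comp_le _ _)
            · exact opNorm_comp_le _ _
    nlinarith [norm_nonneg X, norm_nonneg Z, norm_nonneg c1, norm_nonneg b0,
      mul_le_mul_of_nonneg_left hnorm (le_of_lt hrd),
      mul_le_mul_of_nonneg_right hc1' (mul_nonneg (norm_nonneg X) (norm_nonneg b0)),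
      mul_le_mul_of_nonneg_right hc1' (norm_nonneg Z),
      mul_le_mul_of_nonneg_left hb0 (mul_nonneg (norm_nonneg c1) (norm_nonneg X))]
  refine ⟨?_, hboundg Y⟩
  -- existence via contraction
  have hK1 : ‖c1‖ * ‖b0‖ < 1 := by
    have : ‖c1‖ * ‖b0‖ ≤ (1 / (r + d)) * r := by
      gcongr
    have h2 : (1 / (r + d)) * r < 1 := by
      rw [div_mul_eq_mul_div, one_mul, div_lt_one hrd]; linarith
    linarith
  have hlip : LipschitzWith (‖c1‖₊ * ‖b0‖₊) f := by
    apply LipschitzWith.of_dist_le_mul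
    intro X X'
    rw [dist_eq_norm, dist_eq_norm]
    have : f X - f X' = c1 ∘L (X - X') ∘L b0 := by
      simp only [hf]; ext x; simp [sub_apply, comp_apply, map_sub]
    rw [this]
    push_cast
    calc ‖c1 ∘L (X - X') ∘L b0‖ ≤ ‖c1‖ * ‖(X - X') ∘L b0‖ := opNorm_comp_le _ _
      _ ≤ ‖c1‖ * (‖X - X'‖ * ‖b0‖) := by gcongr; exact opNorm_comp_le _ _
      _ = ‖c1‖ * ‖b0‖ * ‖X - X'‖ := by ring
  have hcw : ContractingWith (‖c1‖₊ * ‖b0‖₊) f := by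
    refine ⟨?_, hlip⟩
    rw [← NNReal.coe_lt_coe]
    push_cast
    exact hK1
  obtain ⟨X₀, hX₀⟩ : ∃ X₀, Function.IsFixedPt f X₀ :=
    ⟨ContractingWith.fixedPoint f hcw, hcw.fixedPoint_isFixedPt⟩
  have hX₀e : X₀ ∘L b0 - b1 ∘L X₀ = Y := (hiff _).mpr hX₀
  refine ⟨X₀, hX₀e, ?_⟩
  intro X' hX'
  have h0 : (X' - X₀) ∘L b0 - b1 ∘L (X' - X₀) = 0 := by
    rw [sub_comp, comp_sub, sub_sub_sub_comm, hX', hX₀e, sub_self]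
  have hb := hboundg 0 _ h0
  rw [norm_zero] at hb
  have hle : ‖X' - X₀‖ ≤ 0 := by nlinarith
  have h00 : X' - X₀ = 0 := by rwa [← norm_le_zero_iff]
  exact sub_eq_zero.mp h00


set_option maxHeartbeats 1000000 in
lemma sylvester_key_left {H0 H1 : Type*}
    [NormedAddCommGroup H0] [InnerProductSpace ℂ H0] [CompleteSpace H0]
    [NormedAddCommGroup H1] [InnerProductSpace ℂ H1] [CompleteSpace H1]
    (b0 c0 : H0 →L[ℂ] H0) (b1 : H1 →L[ℂ] H1)
    (h1 : b0 ∘L c0 = ContinuousLinearMap.id ℂ H0)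
    (h2 : c0 ∘L b0 = ContinuousLinearMap.id ℂ H0)
    (r d : ℝ) (hd : 0 < d) (hb1 : ‖b1‖ ≤ r) (hc0 : ‖c0‖ ≤ 1 / (r + d))
    (Y : H0 →L[ℂ] H1) :
    (∃! X : H0 →L[ℂ] H1, X ∘L b0 - b1 ∘L X = Y) ∧
      ∀ X : H0 →L[ℂ] H1, X ∘L b0 - b1 ∘L X = Y → d * ‖X‖ ≤ ‖Y‖ := by
  have hr : 0 ≤ r := le_trans (norm_nonneg _) hb1
  have hrd : 0 < r + d := by linarith
  have hc0' : ‖c0‖ * (r + d) ≤ 1 := by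
    rw [← le_div_iff₀ hrd]; exact hc0
  set f : (H0 →L[ℂ] H1) → (H0 →L[ℂ] H1) :=
    fun X => b1 ∘L X ∘L c0 + Y ∘L c0 with hf
  have hiff : ∀ X : H0 →L[ℂ] H1, (X ∘L b0 - b1 ∘L X = Y) ↔ f X = X := by
    intro X
    constructor
    · intro hX
      have : (X ∘L b0 - b1 ∘L X) ∘L c0 = Y ∘L c0 := by rw [hX]
      rw [sub_comp, ContinuousLinearMap.comp_assoc, h1, ContinuousLinearMap.comp_id,
        ContinuousLinearMap.comp_assoc] at this
      simp only [hf]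
      rw [← this]; abel
    · intro hX
      have : (f X) ∘L b0 = X ∘L b0 := by rw [hX]
      simp only [hf, add_comp] at this
      rw [ContinuousLinearMap.comp_assoc b1 (X ∘L c0) b0,
        ContinuousLinearMap.comp_assoc X c0 b0, h2, ContinuousLinearMap.comp_id,
        ContinuousLinearMap.comp_assoc Y c0 b0, h2, ContinuousLinearMap.comp_id] at this
      rw [← this]; abel
  have hboundg : ∀ (Z : H0 →L[ℂ] H1) (X : H0 →L[ℂ] H1),
      X ∘L b0 - b1 ∘L X = Z → d * ‖X‖ ≤ ‖Z‖ := by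
    intro Z X hX
    have hfx : X = b1 ∘L (X ∘L c0) + Z ∘L c0 := by
      have : (X ∘L b0 - b1 ∘L X) ∘L c0 = Z ∘L c0 := by rw [hX]
      rw [sub_comp, ContinuousLinearMap.comp_assoc, h1, ContinuousLinearMap.comp_id,
        ContinuousLinearMap.comp_assoc] at this
      rw [← this]; abel
    have hnorm : ‖X‖ ≤ ‖b1‖ * (‖X‖ * ‖c0‖) + ‖Z‖ * ‖c0‖ := by
      calc ‖X‖ = ‖b1 ∘L (X ∘L c0) + Z ∘L c0‖ := by rw [← hfx]
        _ ≤ ‖b1 ∘L (X ∘L c0)‖ + ‖Z ∘L c0‖ := norm_add_le _ _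
        _ ≤ ‖b1‖ * (‖X‖ * ‖c0‖) + ‖Z‖ * ‖c0‖ := by
            gcongr
            · exact le_trans (opNorm_comp_le _ _)
                (by gcongr; exact opNorm_comp_le _ _)
            · exact opNorm_comp_le _ _
    nlinarith [norm_nonneg X, norm_nonneg Z, norm_nonneg c0, norm_nonneg b1,
      mul_le_mul_of_nonneg_left hnorm (le_of_lt hrd),
      mul_le_mul_of_nonneg_right hc0' (mul_nonneg (norm_nonneg X) (norm_nonneg b1)),
      mul_le_mul_of_nonneg_right hc0' (norm_nonneg Z),
      mul_le_mul_of_nonneg_left hb1 (mul_nonneg (norm_nonneg c0) (norm_nonneg X))]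
  refine ⟨?_, hboundg Y⟩
  have hK1 : ‖b1‖ * ‖c0‖ < 1 := by
    have ha : ‖b1‖ * ‖c0‖ ≤ r * (1 / (r + d)) := by gcongr
    have hb : r * (1 / (r + d)) < 1 := by
      rw [mul_div_assoc', mul_one, div_lt_one hrd]; linarith
    linarith
  have hlip : LipschitzWith (‖b1‖₊ * ‖c0‖₊) f := by
    apply LipschitzWith.of_dist_le_mul
    intro X X'
    rw [dist_eq_norm, dist_eq_norm]
    have : f X - f X' = b1 ∘L (X - X') ∘L c0 := by
      simp only [hf]; ext x; simp [sub_apply, comp_apply, map_sub]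
    rw [this]
    push_cast
    calc ‖b1 ∘L (X - X') ∘L c0‖ ≤ ‖b1‖ * ‖(X - X') ∘L c0‖ := opNorm_comp_le _ _
      _ ≤ ‖b1‖ * (‖X - X'‖ * ‖c0‖) := by gcongr; exact opNorm_comp_le _ _
      _ = ‖b1‖ * ‖c0‖ * ‖X - X'‖ := by ring
  have hcw : ContractingWith (‖b1‖₊ * ‖c0‖₊) f := by
    refine ⟨?_, hlip⟩
    rw [← NNReal.coe_lt_coe]
    push_cast
    exact hK1
  obtain ⟨X₀, hX₀⟩ : ∃ X₀, Function.IsFixedPt f X₀ :=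
    ⟨ContractingWith.fixedPoint f hcw, hcw.fixedPoint_isFixedPt⟩
  have hX₀e : X₀ ∘L b0 - b1 ∘L X₀ = Y := (hiff _).mpr hX₀
  refine ⟨X₀, hX₀e, ?_⟩
  intro X' hX'
  have h0 : (X' - X₀) ∘L b0 - b1 ∘L (X' - X₀) = 0 := by
    rw [sub_comp, comp_sub, sub_sub_sub_comm, hX', hX₀e, sub_self]
  have hb := hboundg 0 _ h0
  rw [norm_zero] at hb
  have hle : ‖X' - X₀‖ ≤ 0 := by nlinarith
  have h00 : X' - X₀ = 0 := by rwa [← norm_le_zero_iff]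
  exact sub_eq_zero.mp h00


lemma norm_le_of_spec {A : Type*} [CStarAlgebra A] {a : A} (ha : IsSelfAdjoint a)
    {t : ℝ} (ht : 0 ≤ t) (h : ∀ z ∈ spectrum ℂ a, ‖z‖ ≤ t) : ‖a‖ ≤ t := by
  have h1 : spectralRadius ℂ a ≤ ENNReal.ofReal t := by
    rw [spectralRadius]
    refine iSup₂_le fun z hz => ?_
    rw [← enorm_eq_nnnorm, ← ofReal_norm]
    exact ENNReal.ofReal_le_ofReal (h z hz)
  rw [ha.spectralRadius_eq_nnnorm] at h1
  rw [← enorm_eq_nnnorm, ← ofReal_norm] at h1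
  exact (ENNReal.ofReal_le_ofReal_iff ht).mp h1

set_option maxHeartbeats 1000000 in
lemma sylvester_setup {H K : Type*}
    [NormedAddCommGroup H] [InnerProductSpace ℂ H] [CompleteSpace H]
    [NormedAddCommGroup K] [InnerProductSpace ℂ K] [CompleteSpace K]
    (A : H →L[ℂ] H) (B : K →L[ℂ] K) (hA : IsSelfAdjoint A) (hB : IsSelfAdjoint B)
    (d : ℝ) (hd0 : 0 < d)
    (hd_le : ∀ μ ∈ spectrum ℂ A, ∀ ν ∈ spectrum ℂ B, d ≤ dist μ ν)
    (hAne : (spectrum ℂ A).Nonempty)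
    (hgap : Disjoint (convexHull ℝ (Complex.re '' spectrum ℂ A)) (Complex.re '' spectrum ℂ B)) :
    ∃ (c r : ℝ) (C : K →L[ℂ] K), 0 ≤ r ∧
      ‖A - (c : ℂ) • 1‖ ≤ r ∧
      (B - (c : ℂ) • 1) * C = 1 ∧ C * (B - (c : ℂ) • 1) = 1 ∧ ‖C‖ ≤ 1 / (r + d) := by
  set S := Complex.re '' spectrum ℂ A with hS
  have hScpt : IsCompact S := (spectrum.isCompact A).image Complex.continuous_re
  have hSne : S.Nonempty := hAne.image _
  set m := sInf S with hm
  set M := sSup S with hM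
  have hmS : m ∈ S := hScpt.sInf_mem hSne
  have hMS : M ∈ S := hScpt.sSup_mem hSne
  have hbddA : BddAbove S := hScpt.bddAbove
  have hbddB : BddBelow S := hScpt.bddBelow
  have hmM : m ≤ M := csInf_le_csSup hSne hbddB hbddA
  set c : ℝ := (m + M) / 2 with hc
  set r : ℝ := (M - m) / 2 with hr
  have hr0 : 0 ≤ r := by rw [hr]; linarith
  have hrd : 0 < r + d := by linarith
  -- selfadjointness of shifts
  have hsmul : IsSelfAdjoint ((c : ℂ) • (1 : H →L[ℂ] H)) := by
    simp [IsSelfAdjoint, star_smul, Complex.star_def, Complex.conj_ofReal]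
  have hsmulK : IsSelfAdjoint ((c : ℂ) • (1 : K →L[ℂ] K)) := by
    simp [IsSelfAdjoint, star_smul, Complex.star_def, Complex.conj_ofReal]
  have hA' : IsSelfAdjoint (A - (c : ℂ) • 1) := hA.sub hsmul
  have hB' : IsSelfAdjoint (B - (c : ℂ) • 1) := hB.sub hsmulK
  -- spectra of shifts
  have hspecA : spectrum ℂ (A - (c : ℂ) • 1) = (· - (c : ℂ)) '' spectrum ℂ A := by
    rw [show ((c : ℂ) • (1 : H →L[ℂ] H)) = algebraMap ℂ (H →L[ℂ] H) (c : ℂ) from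
      (Algebra.algebraMap_eq_smul_one _).symm, ← spectrum.sub_singleton_eq, Set.sub_singleton]
  have hspecB : spectrum ℂ (B - (c : ℂ) • 1) = (· - (c : ℂ)) '' spectrum ℂ B := by
    rw [show ((c : ℂ) • (1 : K →L[ℂ] K)) = algebraMap ℂ (K →L[ℂ] K) (c : ℂ) from
      (Algebra.algebraMap_eq_smul_one _).symm, ← spectrum.sub_singleton_eq, Set.sub_singleton]
  -- norm bound on A - c
  have hnormA : ‖A - (c : ℂ) • 1‖ ≤ r := by
    refine norm_le_of_spec hA' hr0 ?_
    intro z hz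
    rw [hspecA] at hz
    obtain ⟨μ, hμ, rfl⟩ := hz
    show ‖μ - (c : ℂ)‖ ≤ r
    have hμre : μ = (μ.re : ℂ) := hA.mem_spectrum_eq_re hμ
    have hx : μ.re ∈ S := ⟨μ, hμ, rfl⟩
    have h1 : m ≤ μ.re := csInf_le hbddB hx
    have h2 : μ.re ≤ M := le_csSup hbddA hx
    rw [hμre]
    have : ((μ.re : ℂ) - (c : ℂ)) = ((μ.re - c : ℝ) : ℂ) := by push_cast; ring
    rw [this, Complex.norm_real, Real.norm_eq_abs, abs_le]
    constructor <;> simp only [hc, hr] <;> [linarith; linarith]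
  -- lower bound on spectrum of B - c
  have hBspec : ∀ ν ∈ spectrum ℂ B, r + d ≤ ‖ν - (c : ℂ)‖ := by
    intro ν hν
    have hνre : ν = (ν.re : ℂ) := hB.mem_spectrum_eq_re hν
    set y := ν.re with hy
    have hyB : y ∈ Complex.re '' spectrum ℂ B := ⟨ν, hν, rfl⟩
    have hynot : y ∉ convexHull ℝ S := fun hmem => Set.disjoint_left.mp hgap hmem hyB
    have hIcc : Set.Icc m M ⊆ convexHull ℝ S :=
      (convex_convexHull ℝ S).ordConnected.out
        (subset_convexHull ℝ S hmS) (subset_convexHull ℝ S hMS)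
    have hyIcc : y ∉ Set.Icc m M := fun h => hynot (hIcc h)
    rw [Set.mem_Icc, not_and_or, not_le, not_le] at hyIcc
    have hnorm : ‖ν - (c : ℂ)‖ = |y - c| := by
      rw [hνre]
      have : ((y : ℂ) - (c : ℂ)) = ((y - c : ℝ) : ℂ) := by push_cast; ring
      rw [this, Complex.norm_real, Real.norm_eq_abs]
    rw [hnorm]
    rcases hyIcc with hlt | hlt
    · -- y < m
      obtain ⟨μ₁, hμ₁, hre₁⟩ := hmS
      have hμ₁re : μ₁ = (m : ℂ) := by
        rw [hA.mem_spectrum_eq_re hμ₁, hre₁]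
      have hdist := hd_le μ₁ hμ₁ ν hν
      rw [dist_eq_norm, hμ₁re, hνre] at hdist
      have : ((m : ℂ) - (y : ℂ)) = ((m - y : ℝ) : ℂ) := by push_cast; ring
      rw [this, Complex.norm_real, Real.norm_eq_abs, abs_of_pos (by linarith)] at hdist
      have : c - y ≤ |y - c| := by rw [abs_sub_comm]; exact le_abs_self _
      simp only [hc, hr] at *
      linarith
    · -- M < y
      obtain ⟨μ₂, hμ₂, hre₂⟩ := hMS
      have hμ₂re : μ₂ = (M : ℂ) := by
        rw [hA.mem_spectrum_eq_re hμ₂, hre₂]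
      have hdist := hd_le μ₂ hμ₂ ν hν
      rw [dist_eq_norm, hμ₂re, hνre] at hdist
      have : ((M : ℂ) - (y : ℂ)) = ((M - y : ℝ) : ℂ) := by push_cast; ring
      rw [this, Complex.norm_real, Real.norm_eq_abs, abs_of_neg (by linarith), neg_sub] at hdist
      have : y - c ≤ |y - c| := le_abs_self _
      simp only [hc, hr] at *
      linarith
  have hBspec' : ∀ lam ∈ spectrum ℂ (B - (c : ℂ) • 1), r + d ≤ ‖lam‖ := by
    intro lam hlam
    rw [hspecB] at hlam
    obtain ⟨ν, hν, rfl⟩ := hlam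
    exact hBspec ν hν
  -- invertibility
  have hunit : IsUnit (B - (c : ℂ) • 1) := by
    rw [← spectrum.zero_notMem_iff ℂ]
    intro h0
    have := hBspec' 0 h0
    rw [norm_zero] at this
    linarith
  set u := hunit.unit with hu
  have huval : (u : K →L[ℂ] K) = B - (c : ℂ) • 1 := hunit.unit_spec
  set C : K →L[ℂ] K := ↑u⁻¹ with hC
  have hBC : (B - (c : ℂ) • 1) * C = 1 := by rw [← huval]; exact u.mul_inv
  have hCB : C * (B - (c : ℂ) • 1) = 1 := by rw [← huval]; exact u.inv_mul
  have hCsa : IsSelfAdjoint C := by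
    have hs : star C * (B - (c : ℂ) • 1) = 1 := by
      have := congrArg star hBC
      rwa [star_mul, star_one, hB'.star_eq] at this
    calc star C = star C * ((B - (c : ℂ) • 1) * C) := by rw [hBC, mul_one]
      _ = (star C * (B - (c : ℂ) • 1)) * C := (mul_assoc _ _ _).symm
      _ = C := by rw [hs, one_mul]
  have hCnorm : ‖C‖ ≤ 1 / (r + d) := by
    refine norm_le_of_spec hCsa (by positivity) ?_
    intro η hη
    have hη' : η ∈ (spectrum ℂ ((u : K →L[ℂ] K)))⁻¹ := by
      rw [spectrum.map_inv u]; exact hη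
    rw [Set.mem_inv, huval] at hη'
    have hge := hBspec' η⁻¹ hη'
    rw [norm_inv] at hge
    have hη0 : η ≠ 0 := by
      intro h0
      rw [h0] at hge
      simp at hge
      linarith
    have hηpos : 0 < ‖η‖ := norm_pos_iff.mpr hη0
    have hinv : 0 < ‖η‖⁻¹ := by positivity
    have := inv_anti₀ hrd hge
    rwa [inv_inv, ← one_div] at this
  exact ⟨c, r, C, hr0, hnormA, hBC, hCB, hCnorm⟩

/-- Bounded-operator version of Theorem 3.6 (ii) of the paper: if `A0` and `A1` are bounded
self-adjoint operators with disjoint spectra separated by the distance `d > 0`, and moreover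
the convex hull (in ℝ) of the (real) spectrum of one of them is disjoint from the spectrum
of the other, then for every bounded `Y : H0 → H1` the Sylvester equation `X A0 - A1 X = Y`
has a unique bounded solution `X`, and this solution satisfies `d‖X‖ ≤ ‖Y‖`. -/
theorem sylvester_selfAdjoint_annular_d_bound
    {H0 : Type*} [NormedAddCommGroup H0] [InnerProductSpace ℂ H0] [CompleteSpace H0]
    {H1 : Type*} [NormedAddCommGroup H1] [InnerProductSpace ℂ H1] [CompleteSpace H1]
    (A0 : H0 →L[ℂ] H0) (A1 : H1 →L[ℂ] H1)
    (hA0 : IsSelfAdjoint A0) (hA1 : IsSelfAdjoint A1)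
    (hdisj : spectrum ℂ A0 ∩ spectrum ℂ A1 = ∅)
    (d : ℝ)
    (hd : d = sInf {t : ℝ | ∃ μ ∈ spectrum ℂ A0, ∃ ν ∈ spectrum ℂ A1, t = dist μ ν})
    (hd0 : 0 < d)
    (hgap :
      Disjoint (convexHull ℝ (Complex.re '' spectrum ℂ A0)) (Complex.re '' spectrum ℂ A1) ∨
      Disjoint (Complex.re '' spectrum ℂ A0) (convexHull ℝ (Complex.re '' spectrum ℂ A1)))
    (Y : H0 →L[ℂ] H1) :
    (∃! X : H0 →L[ℂ] H1, X ∘L A0 - A1 ∘L X = Y) ∧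
      ∀ X : H0 →L[ℂ] H1, X ∘L A0 - A1 ∘L X = Y → d * ‖X‖ ≤ ‖Y‖ := by
  have hSne : {t : ℝ | ∃ μ ∈ spectrum ℂ A0, ∃ ν ∈ spectrum ℂ A1, t = dist μ ν}.Nonempty := by
    by_contra h
    rw [Set.not_nonempty_iff_eq_empty] at h
    rw [h, Real.sInf_empty] at hd
    exact absurd hd0 (by rw [hd]; exact lt_irrefl 0)
  obtain ⟨t0, μ0, hμ0, ν0, hν0, -⟩ := hSne
  have hA0ne : (spectrum ℂ A0).Nonempty := ⟨μ0, hμ0⟩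
  have hA1ne : (spectrum ℂ A1).Nonempty := ⟨ν0, hν0⟩
  have hd_le : ∀ μ ∈ spectrum ℂ A0, ∀ ν ∈ spectrum ℂ A1, d ≤ dist μ ν := by
    intro μ hμ ν hν
    rw [hd]
    refine csInf_le ⟨0, ?_⟩ ⟨μ, hμ, ν, hν, rfl⟩
    rintro t ⟨μ', -, ν', -, rfl⟩
    exact dist_nonneg
  rcases hgap with hgap | hgap
  · -- convex hull of σ(A0) disjoint from σ(A1): shift A0 into a ball, invert A1 - c
    obtain ⟨c, r, C, hr0, hnormA, hBC, hCB, hCnorm⟩ :=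
      sylvester_setup A0 A1 hA0 hA1 d hd0 hd_le hA0ne hgap
    have h1 : (A1 - (c : ℂ) • 1) ∘L C = ContinuousLinearMap.id ℂ H1 := by
      rw [← ContinuousLinearMap.mul_def, hBC]; rfl
    have h2 : C ∘L (A1 - (c : ℂ) • 1) = ContinuousLinearMap.id ℂ H1 := by
      rw [← ContinuousLinearMap.mul_def, hCB]; rfl
    have hkey := sylvester_key_right (A0 - (c : ℂ) • 1) (A1 - (c : ℂ) • 1) C h1 h2
      r d hd0 hnormA hCnorm Y
    have heq : ∀ X : H0 →L[ℂ] H1,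
        X ∘L (A0 - (c : ℂ) • 1) - (A1 - (c : ℂ) • 1) ∘L X = X ∘L A0 - A1 ∘L X := by
      intro X
      ext x
      simp [sub_apply, comp_apply, smul_apply, map_sub, map_smul]
    obtain ⟨⟨X, hX, huniq⟩, hbd⟩ := hkey
    have hXe : X ∘L A0 - A1 ∘L X = Y := by rw [← heq X]; exact hX
    constructor
    · exact ⟨X, hXe, fun X' hX' => huniq X'
        (show X' ∘L (A0 - (c : ℂ) • 1) - (A1 - (c : ℂ) • 1) ∘L X' = Y by
          rw [heq X']; exact hX')⟩
    · intro X' hX'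
      exact hbd X' (by rw [heq X']; exact hX')
  · -- σ(A0) disjoint from convex hull of σ(A1): shift A1 into a ball, invert A0 - c
    have hd_le' : ∀ μ ∈ spectrum ℂ A1, ∀ ν ∈ spectrum ℂ A0, d ≤ dist μ ν := by
      intro μ hμ ν hν
      rw [dist_comm]
      exact hd_le ν hν μ hμ
    obtain ⟨c, r, C, hr0, hnormA, hBC, hCB, hCnorm⟩ :=
      sylvester_setup A1 A0 hA1 hA0 d hd0 hd_le' hA1ne hgap.symm
    have h1 : (A0 - (c : ℂ) • 1) ∘L C = ContinuousLinearMap.id ℂ H0 := by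
      rw [← ContinuousLinearMap.mul_def, hBC]; rfl
    have h2 : C ∘L (A0 - (c : ℂ) • 1) = ContinuousLinearMap.id ℂ H0 := by
      rw [← ContinuousLinearMap.mul_def, hCB]; rfl
    have hkey := sylvester_key_left (A0 - (c : ℂ) • 1) C (A1 - (c : ℂ) • 1) h1 h2
      r d hd0 hnormA hCnorm Y
    have heq : ∀ X : H0 →L[ℂ] H1,
        X ∘L (A0 - (c : ℂ) • 1) - (A1 - (c : ℂ) • 1) ∘L X = X ∘L A0 - A1 ∘L X := by
      intro X
      ext x
      simp [sub_apply, comp_apply, smul_apply, map_sub, map_smul]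
    obtain ⟨⟨X, hX, huniq⟩, hbd⟩ := hkey
    have hXe : X ∘L A0 - A1 ∘L X = Y := by rw [← heq X]; exact hX
    constructor
    · exact ⟨X, hXe, fun X' hX' => huniq X'
        (show X' ∘L (A0 - (c : ℂ) • 1) - (A1 - (c : ℂ) • 1) ∘L X' = Y by
          rw [heq X']; exact hX')⟩
    · intro X' hX'
      exact hbd X' (by rw [heq X']; exact hX')
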